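/- arXiv:1404.3385 — 4 statements merged into one kernel-verified Lean document; each statement's English description precedes it below -/
import Mathlib

section
/- Let G be a simple graph on n vertices and let u and v be nonadjacent vertices in G with d_G(u) + d_G(v) ≥ n. Then G is Hamiltonian if and only if G + uv (the graph obtained by adding the edge uv) is Hamiltonian. -/
set_option linter.unusedSectionVars false

open SimpleGraph Walk List

namespace BondyChvatalAux

variable {V : Type*} {G : SimpleGraph V} {u v w x a b : V}

lemma support_getElem? (p : G.Walk u v) : ∀ {n : ℕ}, n ≤ p.length →
    p.support[n]? = some (p.getVert n) := by
  induction p with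
  | nil =>
    intro n hn
    simp only [Walk.length_nil, Nat.le_zero] at hn
    subst hn
    simp
  | cons h q ih =>
    intro n hn
    cases n with
    | zero => simp
    | succ n =>
      rw [Walk.getVert_cons_succ, Walk.support_cons, List.getElem?_cons_succ]
      exact ih (by simpa using hn)

lemma getVert_inj (p : G.Walk u v) (hp : p.IsPath) {i j : ℕ} (hi : i ≤ p.length)
    (hj : j ≤ p.length) (h : p.getVert i = p.getVert j) : i = j := by
  apply (List.getElem?_inj (l := p.support) (by rw [Walk.length_support]; omega) hp.support_nodup).mp
  rw [support_getElem? p hi, support_getElem? p hj, h]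

lemma support_drop (p : G.Walk u v) : ∀ (n : ℕ), n ≤ p.length →
    (p.drop n).support = p.support.drop n := by
  induction p with
  | nil =>
    intro n hn
    simp only [Walk.length_nil, Nat.le_zero] at hn
    subst hn
    simp [Walk.drop]
  | cons h q ih =>
    intro n hn
    cases n with
    | zero => simp [Walk.drop]
    | succ n =>
      have h1 : ((Walk.cons h q).drop (n+1)).support = (q.drop n).support := by
        simp [Walk.drop]
      rw [h1, ih n (by simpa using hn)]
      simp

lemma eq_snd_of_mem_edges (p : G.Walk u v) (hp : p.IsPath) (hw : s(u, w) ∈ p.edges) :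
    p.getVert 1 = w := by
  cases p with
  | nil => simp at hw
  | cons h q =>
    rw [Walk.cons_isPath_iff] at hp
    rw [Walk.edges_cons] at hw
    rcases List.mem_cons.mp hw with hw | hw
    · rw [Sym2.eq_iff] at hw
      rcases hw with ⟨-, rfl⟩ | ⟨h1, h2⟩
      · exact (Walk.getVert_cons_succ (n := 0) q h).trans (Walk.getVert_zero q)
      · exfalso
        rw [← h1] at h
        exact G.irrefl h
    · exact absurd (Walk.fst_mem_support_of_mem_edges q hw) hp.2

section DecEq
variable [DecidableEq V]

lemma count_support_tail_closed (d : G.Walk x x) (a : V) :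
    d.support.count a = d.support.tail.count a + if a = x then 1 else 0 := by
  conv_lhs => rw [d.support_eq_cons]
  by_cases hax : a = x <;> simp only [hax, List.count_cons, beq_iff_eq, if_true, if_false] <;> simp_all [eq_comm]

lemma hamCycle_rotate {c : G.Walk u u} (hc : c.IsHamiltonianCycle) (h : v ∈ c.support) :
    (c.rotate _ h).IsHamiltonianCycle := by
  rw [Walk.isHamiltonianCycle_iff_isCycle_and_support_count_tail_eq_one] at *
  refine ⟨hc.1.rotate h, fun a => ?_⟩
  rw [((Walk.support_rotate c _ h).perm).count_eq]
  exact hc.2 a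

lemma hamCycle_reverse {c : G.Walk x x} (hc : c.IsHamiltonianCycle) :
    c.reverse.IsHamiltonianCycle := by
  rw [Walk.isHamiltonianCycle_iff_isCycle_and_support_count_tail_eq_one] at *
  obtain ⟨hcyc, hcnt⟩ := hc
  have hcnt' : ∀ a, c.reverse.support.tail.count a = 1 := by
    intro a
    have h1 : c.reverse.support.count a = c.support.count a := by
      rw [Walk.support_reverse, List.count_reverse]
    rw [count_support_tail_closed c.reverse a, count_support_tail_closed c a, hcnt a] at h1
    omega
  refine ⟨⟨⟨⟨?_⟩, ?_⟩, ?_⟩, hcnt'⟩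
  · rw [Walk.edges_reverse, List.nodup_reverse]
    exact hcyc.isCircuit.isTrail.edges_nodup
  · intro h
    exact hcyc.ne_nil (by simpa using congrArg Walk.reverse h)
  · exact List.nodup_iff_count_le_one.mpr fun a => (hcnt' a).le

lemma hamCycle_transfer {c : G.Walk x x} {H : SimpleGraph V} (hc : c.IsHamiltonianCycle)
    (hs : ∀ e ∈ c.edges, e ∈ H.edgeSet) : (c.transfer H hs).IsHamiltonianCycle := by
  rw [Walk.isHamiltonianCycle_iff_isCycle_and_support_count_tail_eq_one] at *
  refine ⟨hc.1.transfer hs, fun a => ?_⟩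
  rw [Walk.support_transfer]
  exact hc.2 a

lemma cross (huv : u ≠ v) (hnadj : ¬ G.Adj u v)
    (p : G.Walk u v) (hp : p.IsHamiltonian) {i : ℕ} (hi : i < p.length)
    (hva : G.Adj v (p.getVert i)) (hub : G.Adj u (p.getVert (i + 1))) :
    ∃ (x : V) (c : G.Walk x x), c.IsHamiltonianCycle := by
  have hpath := hp.isPath
  have hgr : p.reverse.getVert (p.length - i) = p.getVert i := by
    rw [Walk.getVert_reverse]
    congr 1
    omega
  let q1r : G.Walk (p.getVert i) u := (p.reverse.drop (p.length - i)).copy hgr rfl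
  let q2 : G.Walk (p.getVert (i+1)) v := p.drop (i+1)
  let Q : G.Walk (p.getVert (i+1)) u := q2.append (Walk.cons hva q1r)
  have hq2s : q2.support = p.support.drop (i+1) := support_drop p (i+1) (by omega)
  have hq1s : q1r.support = (p.support.take (i+1)).reverse := by
    show ((p.reverse.drop (p.length - i)).copy hgr rfl).support = _
    rw [Walk.support_copy, support_drop p.reverse _ (by rw [Walk.length_reverse]; omega),
      Walk.support_reverse, List.reverse_take]
    congr 1
    rw [Walk.length_support]
    omega
  have hQs : Q.support = p.support.drop (i+1) ++ (p.support.take (i+1)).reverse := by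
    show (q2.append (Walk.cons hva q1r)).support = _
    rw [Walk.support_append, Walk.support_cons, List.tail_cons, hq2s, hq1s]
  have hperm : Q.support.Perm p.support := by
    rw [hQs]
    calc p.support.drop (i+1) ++ (p.support.take (i+1)).reverse
        ~ p.support.drop (i+1) ++ p.support.take (i+1) :=
          List.Perm.append_left _ (List.reverse_perm _)
      _ ~ p.support.take (i+1) ++ p.support.drop (i+1) := List.perm_append_comm
      _ = p.support := List.take_append_drop _ _
  have hQcount : ∀ a, Q.support.count a = 1 := fun a => by rw [hperm.count_eq]; exact hp a
  have hQpath : Q.IsPath :=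
    Walk.IsPath.mk' (List.nodup_iff_count_le_one.mpr fun a => (hQcount a).le)
  have hno : ∀ a, a ∈ p.support.take (i+1) → a ∉ p.support.drop (i+1) := by
    intro a h1 h2
    have h3 := hp a
    rw [← List.take_append_drop (i+1) p.support, List.count_append] at h3
    have c1 := List.count_pos_iff.mpr h1
    have c2 := List.count_pos_iff.mpr h2
    omega
  have hbm : p.getVert (i+1) ∈ p.support.drop (i+1) := by
    have h0 : (p.support.drop (i+1))[0]? = some (p.getVert (i+1)) := by
      rw [List.getElem?_drop]
      simpa using support_getElem? p (n := i+1) (by omega)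
    exact List.mem_of_getElem? h0
  have hum : u ∈ p.support.take (i+1) := by
    have h0 : (p.support.take (i+1))[0]? = some u := by
      rw [List.getElem?_take]
      simpa using support_getElem? p (n := 0) (by omega)
    exact List.mem_of_getElem? h0
  have hedge : s(u, p.getVert (i+1)) ∉ Q.edges := by
    intro hmem
    have hmem' : s(u, p.getVert (i+1)) ∈ q2.edges ++ (s(v, p.getVert i) :: q1r.edges) := by
      simpa [Q, Walk.edges_append, Walk.edges_cons] using hmem
    rcases List.mem_append.mp hmem' with hmem2 | hmem2
    · have : u ∈ p.support.drop (i+1) := hq2s ▸ Walk.fst_mem_support_of_mem_edges q2 hmem2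
      exact hno u hum this
    · rcases List.mem_cons.mp hmem2 with hmem3 | hmem3
      · rw [Sym2.eq_iff] at hmem3
        rcases hmem3 with ⟨h1, -⟩ | ⟨h1, -⟩
        · exact huv h1
        · refine hnadj ?_
          rw [h1]
          exact hva.symm
      · have : p.getVert (i+1) ∈ (p.support.take (i+1)).reverse :=
          hq1s ▸ Walk.snd_mem_support_of_mem_edges q1r hmem3
        exact hno _ (List.mem_reverse.mp this) hbm
  refine ⟨u, Walk.cons hub Q, ?_⟩
  rw [Walk.isHamiltonianCycle_iff_isCycle_and_support_count_tail_eq_one]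
  refine ⟨(Walk.cons_isCycle_iff Q hub).mpr ⟨hQpath, hedge⟩, fun a => ?_⟩
  rw [Walk.support_cons, List.tail_cons]
  exact hQcount a

lemma pigeon [Fintype V] (G : SimpleGraph V) [DecidableRel G.Adj]
    (hdeg : Fintype.card V ≤ G.degree u + G.degree v)
    (p : G.Walk u v) (hp : p.IsHamiltonian) :
    ∃ i, i < p.length ∧ G.Adj v (p.getVert i) ∧ G.Adj u (p.getVert (i+1)) := by
  have hpath := hp.isPath
  have hcard : p.length + 1 = Fintype.card V := by
    have h1 := hp.length_eq
    have h2 : 0 < Fintype.card V := Fintype.card_pos_iff.mpr ⟨u⟩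
    omega
  set S := (Finset.range p.length).filter (fun i => G.Adj u (p.getVert (i+1))) with hS
  set T := (Finset.range p.length).filter (fun i => G.Adj v (p.getVert i)) with hT
  have hScard : S.card = G.degree u := by
    rw [← SimpleGraph.card_neighborFinset_eq_degree]
    apply Finset.card_bij (fun i _ => p.getVert (i+1))
    · intro i hi
      rw [SimpleGraph.mem_neighborFinset]
      exact (Finset.mem_filter.mp hi).2
    · intro i hi j hj h
      have hi' := Finset.mem_range.mp (Finset.mem_filter.mp hi).1
      have hj' := Finset.mem_range.mp (Finset.mem_filter.mp hj).1
      have := getVert_inj p hpath (i := i+1) (j := j+1) (by omega) (by omega) h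
      omega
    · intro w hw
      rw [SimpleGraph.mem_neighborFinset] at hw
      obtain ⟨m, hm, hmle⟩ := Walk.mem_support_iff_exists_getVert.mp (hp.mem_support w)
      have hm0 : m ≠ 0 := by
        rintro rfl
        rw [Walk.getVert_zero] at hm
        exact G.irrefl (hm ▸ hw)
      refine ⟨m - 1, Finset.mem_filter.mpr ⟨Finset.mem_range.mpr (by omega), ?_⟩, ?_⟩
      · rw [show m - 1 + 1 = m by omega, hm]; exact hw
      · rw [show m - 1 + 1 = m by omega, hm]
  have hTcard : T.card = G.degree v := by
    rw [← SimpleGraph.card_neighborFinset_eq_degree]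
    apply Finset.card_bij (fun i _ => p.getVert i)
    · intro i hi
      rw [SimpleGraph.mem_neighborFinset]
      exact (Finset.mem_filter.mp hi).2
    · intro i hi j hj h
      have hi' := Finset.mem_range.mp (Finset.mem_filter.mp hi).1
      have hj' := Finset.mem_range.mp (Finset.mem_filter.mp hj).1
      exact getVert_inj p hpath (by omega) (by omega) h
    · intro w hw
      rw [SimpleGraph.mem_neighborFinset] at hw
      obtain ⟨m, hm, hmle⟩ := Walk.mem_support_iff_exists_getVert.mp (hp.mem_support w)
      have hm0 : m ≠ p.length := by
        rintro rfl
        rw [Walk.getVert_length] at hm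
        exact G.irrefl (hm ▸ hw)
      exact ⟨m, Finset.mem_filter.mpr ⟨Finset.mem_range.mpr (by omega), hm ▸ hw⟩, hm⟩
  have hunion : (S ∪ T).card ≤ p.length := by
    calc (S ∪ T).card ≤ (Finset.range p.length).card :=
          Finset.card_le_card
            (Finset.union_subset (Finset.filter_subset _ _) (Finset.filter_subset _ _))
      _ = p.length := Finset.card_range _
  have hinter : 0 < (S ∩ T).card := by
    have := Finset.card_union_add_card_inter S T
    omega
  obtain ⟨i, hi⟩ := Finset.card_pos.mp hinter
  rw [Finset.mem_inter, Finset.mem_filter, Finset.mem_filter, Finset.mem_range] at hi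
  exact ⟨i, hi.1.1, hi.2.2, hi.1.2⟩

lemma snd_or_snd_reverse {H : SimpleGraph V} {c : H.Walk u u} (hc : c.IsCycle)
    (he : s(u, v) ∈ c.edges) : c.getVert 1 = v ∨ c.reverse.getVert 1 = v := by
  have hnn := hc.not_nil
  have hcons := c.cons_tail_eq hnn
  have hc2 : (Walk.cons (c.adj_snd hnn) c.tail).IsCycle := by rw [hcons]; exact hc
  have he2 : s(u, v) ∈ (Walk.cons (c.adj_snd hnn) c.tail).edges := by
    rw [hcons]; exact he
  obtain ⟨htp, hne⟩ := (Walk.cons_isCycle_iff _ _).mp hc2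
  rw [Walk.edges_cons] at he2
  rcases List.mem_cons.mp he2 with he3 | he3
  · rw [Sym2.eq_iff] at he3
    rcases he3 with ⟨-, h2⟩ | ⟨h1, -⟩
    · left; exact h2.symm
    · exfalso
      have hadj := c.adj_snd hnn
      rw [← h1] at hadj
      exact H.irrefl hadj
  · right
    have hrev : c.tail.reverse.getVert 1 = v :=
      eq_snd_of_mem_edges _ htp.reverse (by rw [Walk.edges_reverse, List.mem_reverse]; exact he3)
    have hgoal : c.reverse = (Walk.cons (c.adj_snd hnn) c.tail).reverse := by rw [hcons]
    rw [hgoal, Walk.reverse_cons, Walk.getVert_append]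
    split_ifs with h
    · exact hrev
    · have hlen0 : c.tail.length ≠ 0 := by
        intro h0
        have h4 : c.tail.edges.length = 0 := by rw [Walk.length_edges, h0]
        rw [List.length_eq_zero_iff] at h4
        rw [h4] at he3
        simp at he3
      have hlen1 : c.tail.reverse.length = 1 := by
        rw [Walk.length_reverse]
        rw [Walk.length_reverse] at h
        omega
      have hend : c.tail.reverse.getVert 1 = c.getVert 1 :=
        Walk.getVert_of_length_le c.tail.reverse (by omega)
      have hv : c.getVert 1 = v := by rw [← hend, hrev]
      have h5 : 1 - c.tail.reverse.length = 0 := by omega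
      rw [h5]
      simpa using hv

lemma extract_path {H : SimpleGraph V}
    (hle : ∀ e ∈ H.edgeSet, e ∈ G.edgeSet ∨ e = s(u, v))
    {c : H.Walk u u} (hc : c.IsHamiltonianCycle) (hsnd : c.getVert 1 = v) :
    ∃ q : G.Walk v u, q.IsHamiltonian := by
  have hnn := hc.isCycle.not_nil
  have hcons := c.cons_tail_eq hnn
  have hc2 : (Walk.cons (c.adj_snd hnn) c.tail).IsCycle := by rw [hcons]; exact hc.isCycle
  obtain ⟨hpath, hne⟩ := (Walk.cons_isCycle_iff _ _).mp hc2
  have hne' : s(u, v) ∉ c.tail.edges := by rw [← hsnd]; exact hne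
  have hsub : ∀ e ∈ c.tail.edges, e ∈ G.edgeSet := by
    intro e hee
    rcases hle e (Walk.edges_subset_edgeSet c.tail hee) with h | rfl
    · exact h
    · exact absurd hee hne'
  refine ⟨(c.tail.transfer G hsub).copy hsnd rfl, fun a => ?_⟩
  rw [Walk.support_copy, Walk.support_transfer]
  exact hc.isHamiltonian_tail a

end DecEq

end BondyChvatalAux

open BondyChvatalAux in
/-- Bondy–Chvátal lemma: if `u` and `v` are nonadjacent vertices of a simple graph `G`
on `n` vertices with `d_G(u) + d_G(v) ≥ n`, then `G` is Hamiltonian iff `G + uv` is. -/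
theorem stmt_0 {V : Type*} [Fintype V] [DecidableEq V] (G : SimpleGraph V)
    [DecidableRel G.Adj] (u v : V) (huv : u ≠ v) (hnadj : ¬ G.Adj u v)
    (hdeg : Fintype.card V ≤ G.degree u + G.degree v) :
    G.IsHamiltonian ↔ (G ⊔ SimpleGraph.fromEdgeSet {s(u, v)}).IsHamiltonian := by
  constructor
  · exact fun h => h.mono le_sup_left
  · intro h hcard
    obtain ⟨x, c, hc⟩ := h hcard
    have hle : ∀ e ∈ (G ⊔ SimpleGraph.fromEdgeSet {s(u, v)}).edgeSet,
        e ∈ G.edgeSet ∨ e = s(u, v) := by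
      intro e hee
      rw [SimpleGraph.edgeSet_sup, SimpleGraph.edgeSet_fromEdgeSet] at hee
      rcases hee with h1 | h1
      · exact Or.inl h1
      · exact Or.inr (by simpa using h1.1)
    by_cases he : s(u, v) ∈ c.edges
    · have hu : u ∈ c.support := hc.mem_support u
      have hc' := hamCycle_rotate hc hu
      have he' : s(u, v) ∈ (c.rotate _ hu).edges :=
        ((Walk.rotate_edges c _ hu).perm.mem_iff).mpr he
      have main : ∀ (q : G.Walk v u), q.IsHamiltonian →
          ∃ x, ∃ c : G.Walk x x, c.IsHamiltonianCycle := by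
        intro q hq
        have hqr : q.reverse.IsHamiltonian := fun a => by
          rw [Walk.support_reverse, List.count_reverse]; exact hq a
        obtain ⟨i, hi, hva, hub⟩ := pigeon G hdeg q.reverse hqr
        exact cross huv hnadj q.reverse hqr hi hva hub
      rcases snd_or_snd_reverse hc'.isCycle he' with hsnd | hsnd
      · obtain ⟨q, hq⟩ := extract_path hle hc' hsnd
        exact main q hq
      · have he'' : s(u, v) ∈ (c.rotate _ hu).reverse.edges := by
          rw [Walk.edges_reverse, List.mem_reverse]; exact he'
        obtain ⟨q, hq⟩ := extract_path hle (hamCycle_reverse hc') hsnd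
        exact main q hq
    · have hsub : ∀ e ∈ c.edges, e ∈ G.edgeSet := by
        intro e hee
        rcases hle e (Walk.edges_subset_edgeSet c hee) with h1 | rfl
        · exact h1
        · exact absurd hee he
      exact ⟨x, c.transfer G hsub, hamCycle_transfer hc hsub⟩
end

section
/- Let G_1 be a simple graph on n vertices, n ≥ 3, such that any two adjacent vertices x, y satisfy d_{G_1}(x) + d_{G_1}(y) ≥ n − 1, and suppose the complement of G_1 is not Hamiltonian. Let T be the set of isolated vertices of G_1, R the set of vertices of degree at least (n−1)/2, and Q the remaining vertices. Then |R ∪ Q| > |T|. -/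
namespace Stmt4Aux


variable {α : Type*}

/-- Interleave two lists. -/
def interL : List α → List α → List α
  | [], ys => ys
  | x :: xs, [] => x :: xs
  | x :: xs, y :: ys => x :: y :: interL xs ys

lemma interL_perm : ∀ (xs ys : List α), (interL xs ys).Perm (xs ++ ys)
  | [], ys => by simp [interL]
  | x :: xs, [] => by simp [interL]
  | x :: xs, y :: ys => by
    simpa [interL] using ((interL_perm xs ys).cons y).trans
      ((List.perm_middle.symm).trans (List.Perm.refl (xs ++ y :: ys)))

lemma interL_cons (x : α) (xs ys : List α) : ∃ M, interL (x :: xs) ys = x :: M := by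
  cases ys <;> exact ⟨_, rfl⟩

lemma interL_chain' (P : α → Prop) :
    ∀ (xs ys : List α), (∀ a ∈ xs, P a) → ys.length ≤ xs.length →
      List.Chain' (fun a b => P a ∨ P b) (interL xs ys)
  | [], ys, _, hlen => by
    have : ys = [] := List.eq_nil_of_length_eq_zero (Nat.le_zero.mp hlen)
    simp [this, interL]
    exact List.isChain_nil
  | x :: xs, [], hx, _ => by
    clear interL_chain'
    induction xs generalizing x with
    | nil => simp [interL]; exact List.isChain_singleton x
    | cons a l ih =>
      rw [show interL (x :: a :: l) [] = x :: a :: l from rfl]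
      refine List.IsChain.cons_cons (Or.inl (hx x (by simp))) ?_
      have := ih a (fun b hb => hx b (by simp at hb ⊢; tauto))
      exact this (Nat.zero_le _)
  | x :: xs, y :: ys, hx, hlen => by
    rw [show interL (x :: xs) (y :: ys) = x :: y :: interL xs ys from rfl]
    refine List.IsChain.cons_cons (Or.inl (hx x (by simp))) ?_
    rw [List.isChain_cons]
    constructor
    · intro z hz
      cases xs with
      | nil =>
        have : ys = [] := List.eq_nil_of_length_eq_zero (Nat.le_zero.mp (by simpa using hlen))
        simp [this, interL] at hz
      | cons a l =>
        obtain ⟨M, hM⟩ := interL_cons a l ys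
        rw [hM] at hz
        simp at hz
        subst hz
        exact Or.inr (hx a (by simp))
    · exact interL_chain' P xs ys (fun b hb => hx b (by simp [hb])) (by simpa using hlen)



variable {V : Type*} {H : SimpleGraph V}

/-- Build a walk from a chain of adjacencies. -/
def mkWalk (H : SimpleGraph V) : ∀ (a : V) (l : List V) (b : V),
    List.Chain H.Adj a (l ++ [b]) → H.Walk a b
  | _, [], _, h => SimpleGraph.Walk.cons (by simpa using (List.chain_cons.mp h).1)
      SimpleGraph.Walk.nil
  | _, c :: l, b, h => SimpleGraph.Walk.cons (List.chain_cons.mp h).1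
      (mkWalk H c l b (List.chain_cons.mp h).2)

lemma mkWalk_support (H : SimpleGraph V) : ∀ (a : V) (l : List V) (b : V)
    (h : List.Chain H.Adj a (l ++ [b])), (mkWalk H a l b h).support = a :: (l ++ [b])
  | _, [], _, _ => rfl
  | a, c :: l, b, h => by
    simp [mkWalk]
    exact mkWalk_support H c l b _



variable {α : Type*}

lemma chain'_and {R S : α → α → Prop} :
    ∀ {l : List α}, List.Chain' R l → List.Chain' S l →
      List.Chain' (fun a b => R a b ∧ S a b) l
  | [], _, _ => List.isChain_nil
  | [_], _, _ => List.isChain_singleton _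
  | a :: b :: l, hR, hS => by
    change List.IsChain R (a :: b :: l) at hR
    change List.IsChain S (a :: b :: l) at hS
    change List.IsChain _ (a :: b :: l)
    rw [List.isChain_cons_cons] at hR hS ⊢
    exact ⟨⟨hR.1, hS.1⟩, chain'_and hR.2 hS.2⟩


variable {V : Type*} [Fintype V] [DecidableEq V]

lemma ham (H : SimpleGraph V) (Tf : Finset V)
    (hTadj : ∀ x ∈ Tf, ∀ y : V, x ≠ y → H.Adj x y)
    (hcard : Tfᶜ.card ≤ Tf.card) (hn3 : 3 ≤ Fintype.card V) :
    H.IsHamiltonian := by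
  classical
  set tl := Tf.toList with htl
  set sl := Tfᶜ.toList with hsl
  have hTfc : Tf.card ≤ Fintype.card V := Finset.card_le_card (Finset.subset_univ _) |>.trans
    (le_of_eq (Finset.card_univ))
  have hlen_ts : tl.length + sl.length = Fintype.card V := by
    simp only [htl, hsl, Finset.length_toList, Finset.card_compl]
    omega
  have hsl_le : sl.length ≤ tl.length := by
    simpa [htl, hsl, Finset.length_toList] using hcard
  -- the interleaved list
  set L := interL tl sl with hLdef
  have hperm : L.Perm (tl ++ sl) := interL_perm tl sl
  have hnodup : L.Nodup := by
    refine hperm.nodup_iff.mpr (List.Nodup.append (Finset.nodup_toList _)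
      (Finset.nodup_toList _) ?_)
    intro x hx hx'
    rw [htl, Finset.mem_toList] at hx
    rw [hsl, Finset.mem_toList, Finset.mem_compl] at hx'
    exact hx' hx
  have hmem : ∀ v : V, v ∈ L := by
    intro v
    rw [hperm.mem_iff, List.mem_append, htl, hsl, Finset.mem_toList, Finset.mem_toList,
      Finset.mem_compl]
    tauto
  have hlenL : L.length = Fintype.card V := by
    rw [hperm.length_eq, List.length_append, hlen_ts]
  have htl_mem : ∀ a ∈ tl, a ∈ Tf := by intro a ha; rwa [htl, Finset.mem_toList] at ha
  -- chain of "one endpoint in Tf"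
  have chainP : List.Chain' (fun a b => a ∈ Tf ∨ b ∈ Tf) L :=
    interL_chain' (· ∈ Tf) tl sl htl_mem hsl_le
  have chainNe : List.Chain' (· ≠ ·) L := List.Pairwise.isChain hnodup
  have chainAdj : List.Chain' H.Adj L := by
    refine (chain'_and chainNe chainP).imp ?_
    rintro a b ⟨hne, hT | hT⟩
    · exact hTadj a hT b hne
    · exact (hTadj b hT a hne.symm).symm
  -- decompose L
  have htl2 : 2 ≤ tl.length := by omega
  have htlne : tl ≠ [] := by
    intro h; rw [h] at htl2; simp at htl2
  obtain ⟨w, tl', htlw⟩ := List.exists_cons_of_ne_nil htlne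
  obtain ⟨M, hM⟩ : ∃ M, L = w :: M := by
    rw [hLdef, htlw]; exact interL_cons w tl' sl
  have hMlen : 2 ≤ M.length := by
    have := hlenL; rw [hM, List.length_cons] at this; omega
  obtain ⟨M'', b, hM''⟩ : ∃ M'' b, M = M'' ++ [b] := by
    rcases List.eq_nil_or_concat M with h | ⟨M'', b, h⟩
    · rw [h] at hMlen; simp at hMlen
    · exact ⟨M'', b, by simpa [List.concat_eq_append] using h⟩
  obtain ⟨m, M', hM'⟩ : ∃ m M', M'' = m :: M' := by
    cases M'' with
    | nil => rw [hM''] at hMlen; simp at hMlen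
    | cons a l => exact ⟨a, l, rfl⟩
  have hL : L = w :: (m :: M') ++ [b] := by rw [hM, hM'', hM']; simp
  rw [hL] at chainAdj hnodup hmem
  have hchain : List.Chain H.Adj w ((m :: M') ++ [b]) := chainAdj
  -- the hamiltonian path
  set p := mkWalk H w (m :: M') b hchain with hp
  have hsupp : p.support = w :: ((m :: M') ++ [b]) := mkWalk_support H w (m :: M') b hchain
  have hpath : p.IsPath := SimpleGraph.Walk.IsPath.mk' (by rw [hsupp]; exact hnodup)
  have hwTf : w ∈ Tf := htl_mem w (by rw [htlw]; simp)
  have hwb : w ≠ b := by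
    have := hnodup
    simp at this
    tauto
  have hadj_bw : H.Adj b w := (hTadj w hwTf b hwb).symm
  set c := SimpleGraph.Walk.cons hadj_bw p with hc
  have hcyc : c.IsCycle := by
    rw [hc, SimpleGraph.Walk.cons_isCycle_iff]
    refine ⟨hpath, ?_⟩
    intro hmem_e
    have hq : p = SimpleGraph.Walk.cons (List.chain_cons.mp hchain).1
        (mkWalk H m M' b (List.chain_cons.mp hchain).2) := rfl
    set q := mkWalk H m M' b (List.chain_cons.mp hchain).2 with hqdef
    rw [hq, SimpleGraph.Walk.edges_cons, List.mem_cons] at hmem_e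
    have hnd := hnodup
    simp at hnd
    rcases hmem_e with h | h
    · have hmb : m ≠ b := by tauto
      rw [Sym2.eq_iff] at h
      rcases h with ⟨h1, h2⟩ | ⟨h1, h2⟩ <;> first
        | exact hwb h1.symm | exact hmb h1.symm | exact hwb h2.symm | exact hmb h2.symm
        | exact hwb h1 | exact hmb h1 | exact hwb h2 | exact hmb h2
    · have : w ∈ q.support := SimpleGraph.Walk.snd_mem_support_of_mem_edges q h
      have hs : q.support = m :: (M' ++ [b]) := mkWalk_support H m M' b _
      rw [hs] at this
      simp at this
      tauto
  have hhamc : c.IsHamiltonianCycle := by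
    rw [SimpleGraph.Walk.isHamiltonianCycle_iff_isCycle_and_support_count_tail_eq_one]
    refine ⟨hcyc, ?_⟩
    intro a
    have : c.support = b :: p.support := by rw [hc, SimpleGraph.Walk.support_cons]
    rw [this, List.tail_cons, hsupp]
    exact List.count_eq_one_of_mem hnodup (hmem a)
  exact fun _ => ⟨b, c, hhamc⟩

end Stmt4Aux

/-- If any two adjacent vertices of `G₁` have degree sum at least `n - 1`, the complement
of `G₁` is not Hamiltonian, `T` is the set of isolated vertices, `R` the set of vertices
of degree at least `(n-1)/2` and `Q` the remaining vertices, then `|R ∪ Q| > |T|`. -/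
theorem stmt_4 {V : Type*} [Fintype V] [DecidableEq V] (G₁ : SimpleGraph V)
    [DecidableRel G₁.Adj] (n : ℕ) (hn : n = Fintype.card V) (hn3 : 3 ≤ n)
    (hdeg : ∀ x y : V, G₁.Adj x y → n - 1 ≤ G₁.degree x + G₁.degree y)
    (hnotHam : ¬ (G₁ᶜ).IsHamiltonian)
    (T R Q : Set V)
    (hT : T = {v : V | G₁.degree v = 0})
    (hR : R = {v : V | n - 1 ≤ 2 * G₁.degree v})
    (hQ : Q = Set.univ \ (T ∪ R)) :
    T.ncard < (R ∪ Q).ncard := by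
  classical
  set Tf : Finset V := Finset.univ.filter (fun v => G₁.degree v = 0) with hTf
  have hTset : T = (↑Tf : Set V) := by
    rw [hT]; ext v; simp [hTf]
  have hRQ : R ∪ Q = (↑(Tfᶜ) : Set V) := by
    rw [hQ, hT, hR]
    ext v
    simp only [hTf, Set.mem_union, Set.mem_diff, Set.mem_univ, true_and, Set.mem_setOf_eq,
      Finset.coe_compl, Set.mem_compl_iff, Finset.mem_coe, Finset.mem_filter,
      Finset.mem_univ, true_and]
    omega
  rw [hTset, hRQ, Set.ncard_coe_finset, Set.ncard_coe_finset]
  by_contra hcon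
  push_neg at hcon
  apply hnotHam
  refine Stmt4Aux.ham (G₁ᶜ) Tf ?_ hcon (by omega)
  intro x hx y hne
  rw [SimpleGraph.compl_adj]
  refine ⟨hne, fun hadj => ?_⟩
  have hy : y ∈ G₁.neighborFinset x := by simpa using hadj
  have hpos : 0 < G₁.degree x := Finset.card_pos.mpr ⟨y, hy⟩
  simp [hTf] at hx
  omega
end

section
/- Let G_1 be a simple graph on n vertices in which any two adjacent vertices x, y satisfy d(x) + d(y) ≥ n − 1. Let T be the set of isolated vertices, R the set of vertices of degree at least (n−1)/2, Q the rest, and suppose |R| = |T|, R ≠ ∅, and Q ≠ ∅. Then every vertex of R is adjacent (in G_1) to every vertex of Q, and every two distinct vertices of R are adjacent in G_1; that is, the bipartite subgraph between R and Q is complete bipartite and R induces a complete subgraph. -/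
/-- If any two adjacent vertices of `G₁` have degree sum at least `n - 1`, `T` is the set
of isolated vertices, `R` the set of vertices of degree at least `(n-1)/2`,
`Q = V \ (T ∪ R)`, `|R| = |T|`, and `R, Q` are nonempty, then every vertex of `R` is
adjacent to every vertex of `Q`, and any two distinct vertices of `R` are adjacent. -/
theorem stmt_5 {V : Type*} [Fintype V] [DecidableEq V] (G₁ : SimpleGraph V)
    [DecidableRel G₁.Adj] (n : ℕ) (hn : n = Fintype.card V)
    (hdeg : ∀ x y : V, G₁.Adj x y → n - 1 ≤ G₁.degree x + G₁.degree y)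
    (T R Q : Set V)
    (hT : T = {v : V | G₁.degree v = 0})
    (hR : R = {v : V | n - 1 ≤ 2 * G₁.degree v})
    (hQ : Q = Set.univ \ (T ∪ R))
    (hRT : R.ncard = T.ncard) (hRne : R.Nonempty) (hQne : Q.Nonempty) :
    (∀ x ∈ R, ∀ y ∈ Q, G₁.Adj x y) ∧ (∀ x ∈ R, ∀ y ∈ R, x ≠ y → G₁.Adj x y) := by
  classical
  subst hT hR hQ
  set t : Finset V := Finset.univ.filter (fun v => G₁.degree v = 0) with ht
  set r : Finset V := Finset.univ.filter (fun v => n - 1 ≤ 2 * G₁.degree v) with hr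
  have hmemt : ∀ v : V, v ∈ t ↔ G₁.degree v = 0 := by intro v; simp [ht]
  have hmemr : ∀ v : V, v ∈ r ↔ n - 1 ≤ 2 * G₁.degree v := by intro v; simp [hr]
  have hrc : r.card = t.card := by
    have h1 : ({v : V | n - 1 ≤ 2 * G₁.degree v} : Set V) = ↑r := by
      ext v; simp [hr]
    have h2 : ({v : V | G₁.degree v = 0} : Set V) = ↑t := by
      ext v; simp [ht]
    rw [h1, h2, Set.ncard_coe_finset, Set.ncard_coe_finset] at hRT
    exact hRT
  obtain ⟨q0, hq0⟩ := hQne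
  obtain ⟨r0, hr0⟩ := hRne
  have hq0mem := hq0
  rw [Set.mem_diff, Set.mem_union] at hq0mem
  have hq0R : ¬ (n - 1 ≤ 2 * G₁.degree q0) := fun h => hq0mem.2 (Or.inr h)
  have hq0T : G₁.degree q0 ≠ 0 := fun h => hq0mem.2 (Or.inl h)
  have hne : q0 ≠ r0 := by
    intro h
    exact hq0R (h ▸ hr0)
  have hn2 : 2 ≤ n := by
    rw [hn]
    exact Fintype.one_lt_card_iff.mpr ⟨q0, r0, hne⟩
  -- vertices of R are not isolated
  have hRnotT : ∀ v : V, n - 1 ≤ 2 * G₁.degree v → G₁.degree v ≠ 0 := by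
    intro v hv h0; omega
  -- neighborhoods avoid isolated vertices and the vertex itself
  have hNsub : ∀ x : V, G₁.neighborFinset x ⊆ (insert x t)ᶜ := by
    intro x y hy
    rw [SimpleGraph.mem_neighborFinset] at hy
    rw [Finset.mem_compl]
    intro hmem
    rcases Finset.mem_insert.mp hmem with h | h
    · exact hy.ne h.symm
    · have h0 : G₁.degree y = 0 := (hmemt y).mp h
      have hpos : 0 < G₁.degree y :=
        (SimpleGraph.degree_pos_iff_exists_adj G₁ y).mpr ⟨x, hy.symm⟩
      omega
  have hdegle : ∀ x : V, x ∉ t → G₁.degree x ≤ n - (t.card + 1) := by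
    intro x hx
    have hc := Finset.card_le_card (hNsub x)
    rw [Finset.card_compl, Finset.card_insert_of_notMem hx] at hc
    rw [hn]
    exact hc
  -- neighbors of Q-vertices are in r
  have keyA : ∀ q x : V, ¬ (n - 1 ≤ 2 * G₁.degree q) → G₁.Adj q x → x ∈ r := by
    intro q x h hadj
    rw [hmemr]
    have := hdeg q x hadj
    omega
  -- Q-vertices have neighborhood exactly r
  have keyQ : ∀ q : V, G₁.degree q ≠ 0 → ¬ (n - 1 ≤ 2 * G₁.degree q) →
      G₁.neighborFinset q = r := by
    intro q hq0' hqr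
    have hsub : G₁.neighborFinset q ⊆ r := by
      intro x hx
      exact keyA q x hqr ((SimpleGraph.mem_neighborFinset G₁ q x).mp hx)
    obtain ⟨x, hx⟩ : ∃ x, G₁.Adj q x :=
      (SimpleGraph.degree_pos_iff_exists_adj G₁ q).mp (Nat.pos_of_ne_zero hq0')
    have hxr : x ∈ r := keyA q x hqr hx
    have hxt : x ∉ t := fun h => hRnotT x ((hmemr x).mp hxr) ((hmemt x).mp h)
    have h1 : G₁.degree x ≤ n - (t.card + 1) := hdegle x hxt
    have h2 : n - 1 ≤ G₁.degree q + G₁.degree x := hdeg q x hx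
    have h3 : 0 < G₁.degree x :=
      (SimpleGraph.degree_pos_iff_exists_adj G₁ x).mpr ⟨q, hx.symm⟩
    have hcard : r.card ≤ (G₁.neighborFinset q).card := by
      rw [hrc]
      show t.card ≤ G₁.degree q
      omega
    exact (Finset.eq_of_subset_of_card_le hsub hcard).symm ▸ rfl
  have keyQ' : ∀ q : V, G₁.degree q ≠ 0 → ¬ (n - 1 ≤ 2 * G₁.degree q) →
      G₁.neighborFinset q = r := keyQ
  -- conclusion 1
  have concl1 : ∀ x ∈ ({v : V | n - 1 ≤ 2 * G₁.degree v} : Set V),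
      ∀ y ∈ (Set.univ \ ({v : V | G₁.degree v = 0} ∪ {v : V | n - 1 ≤ 2 * G₁.degree v})),
      G₁.Adj x y := by
    intro x hx y hy
    rw [Set.mem_diff, Set.mem_union] at hy
    have hyT : G₁.degree y ≠ 0 := fun h => hy.2 (Or.inl h)
    have hyR : ¬ (n - 1 ≤ 2 * G₁.degree y) := fun h => hy.2 (Or.inr h)
    have hNy := keyQ y hyT hyR
    have hxr : x ∈ r := (hmemr x).mpr hx
    have : x ∈ G₁.neighborFinset y := hNy ▸ hxr
    exact ((SimpleGraph.mem_neighborFinset G₁ y x).mp this).symm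
  refine ⟨concl1, ?_⟩
  -- conclusion 2
  have hNq0 := keyQ q0 hq0T hq0R
  have hdq0 : G₁.degree q0 = t.card := by
    have := congrArg Finset.card hNq0
    rw [hrc] at this
    exact this
  intro x hx y hy hxy
  have hx' : n - 1 ≤ 2 * G₁.degree x := hx
  have hy' : n - 1 ≤ 2 * G₁.degree y := hy
  have hxq0 : G₁.Adj q0 x := by
    have : x ∈ G₁.neighborFinset q0 := hNq0 ▸ ((hmemr x).mpr hx')
    exact (SimpleGraph.mem_neighborFinset G₁ q0 x).mp this
  have hdx : n - 1 ≤ G₁.degree q0 + G₁.degree x := hdeg q0 x hxq0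
  have hxt : x ∉ t := fun h => hRnotT x hx' ((hmemt x).mp h)
  have hyt : y ∉ t := fun h => hRnotT y hy' ((hmemt y).mp h)
  have heq : G₁.neighborFinset x = (insert x t)ᶜ := by
    apply Finset.eq_of_subset_of_card_le (hNsub x)
    rw [Finset.card_compl, Finset.card_insert_of_notMem hxt, ← hn]
    show n - (t.card + 1) ≤ G₁.degree x
    omega
  have hymem : y ∈ (insert x t)ᶜ := by
    rw [Finset.mem_compl, Finset.mem_insert]
    push_neg
    exact ⟨hxy.symm, hyt⟩
  have : y ∈ G₁.neighborFinset x := heq ▸ hymem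
  exact (SimpleGraph.mem_neighborFinset G₁ x y).mp this
end

section
/- Let r ≥ 5, f ≤ r − 3, and let nonnegative reals u_{f+1} ≤ u_{f+2} ≤ ... ≤ u_{r−1} satisfy: the product ∏_{i=f+1}^{r−1} u_i ≤ (r−2)·∑_{i=f+1}^{r−1} u_i + f·C, where C = binom(4r, r−1). Suppose u_{f+1} ≥ r − 1 and u_{r−1} ≥ (n−1)/2 with n > 6r·C. Then one reaches a contradiction; that is, under these hypotheses no such numbers exist, so in fact u_{f+1} ≤ r − 2. -/
lemma stmt_8_choose_mono (n : ℕ) : ∀ k, 2 ≤ k → k ≤ n / 2 → Nat.choose n 2 ≤ Nat.choose n k := by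
  intro k
  induction k with
  | zero => intro h _; omega
  | succ j ih =>
    intro h2 hk
    rcases Nat.lt_or_ge j 2 with h | h
    · have hj : j = 1 := by omega
      subst hj; exact le_rfl
    · exact (ih h (by omega)).trans (Nat.choose_le_succ_of_lt_half_left (by omega))

set_option maxHeartbeats 1000000 in
/-- Let `r ≥ 5`, `f ≤ r - 3`, `C = C(4r, r-1)`, `n > 6rC`, and let nonnegative integers
`u (f+1) ≤ … ≤ u (r-1)` satisfy `u (r-1) ≥ (n-1)/2` and
`∏ u_i ≤ (r-2)·∑ u_i + f·C`.  If `u (f+1) ≥ r - 1`, then we reach a contradiction. -/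
theorem stmt_8 (r f n : ℕ) (hr : 5 ≤ r) (hf : f + 3 ≤ r)
    (hn : 6 * r * Nat.choose (4 * r) (r - 1) < n)
    (u : ℕ → ℕ)
    (hmono : ∀ i j, f + 1 ≤ i → i ≤ j → j ≤ r - 1 → u i ≤ u j)
    (hlast : n - 1 ≤ 2 * u (r - 1))
    (hps : ∏ i ∈ Finset.Icc (f + 1) (r - 1), u i ≤
      (r - 2) * ∑ i ∈ Finset.Icc (f + 1) (r - 1), u i + f * Nat.choose (4 * r) (r - 1))
    (hfirst : r - 1 ≤ u (f + 1)) :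
    False := by
  set C := Nat.choose (4 * r) (r - 1) with hCdef
  have hC1 : 1 ≤ C := Nat.choose_pos (by omega)
  -- u (r-1) ≥ 3 r C
  have hU : 3 * r * C ≤ u (r - 1) := by
    have h2 : 6 * r * C ≤ n - 1 := Nat.le_sub_one_of_lt hn
    have h3 : 2 * (3 * r * C) ≤ 2 * u (r - 1) := by
      calc 2 * (3 * r * C) = 6 * r * C := by ring
        _ ≤ n - 1 := h2
        _ ≤ 2 * u (r - 1) := hlast
    exact Nat.le_of_mul_le_mul_left h3 (by norm_num)
  obtain ⟨t, rfl⟩ : ∃ t, r = f + 3 + t := ⟨r - (f + 3), by omega⟩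
  rcases t with _ | s
  · -- m = 2 case : r = f + 3
    have e1 : f + 3 + 0 - 1 = f + 2 := by omega
    have e2 : f + 3 + 0 - 2 = f + 1 := by omega
    rw [e1, e2] at hps
    rw [e1] at hmono hlast hfirst hU hCdef
    have hprod : ∏ i ∈ Finset.Icc (f + 1) (f + 2), u i = u (f + 1) * u (f + 2) := by
      have e3 : f + 2 = (f + 1) + 1 := by omega
      rw [e3, Finset.prod_Icc_succ_top (by omega), Finset.Icc_self, Finset.prod_singleton]
    have hsum : ∑ i ∈ Finset.Icc (f + 1) (f + 2), u i = u (f + 1) + u (f + 2) := by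
      have e3 : f + 2 = (f + 1) + 1 := by omega
      rw [e3, Finset.sum_Icc_succ_top (by omega), Finset.Icc_self, Finset.sum_singleton]
    rw [hprod, hsum] at hps
    have hxy : u (f + 1) ≤ u (f + 2) := hmono (f + 1) (f + 2) le_rfl (by omega) (by omega)
    -- C is big: C > (f+2)*(f+1)
    have hCbig : (f + 2) * (f + 1) < C := by
      have h4 : Nat.choose (4 * (f + 3 + 0)) 2 ≤ C := by
        rw [hCdef]
        exact stmt_8_choose_mono _ (f + 2) (by omega) (by omega)
      have h5 : 4 * (f + 3 + 0) = 4 * f + 12 := by ring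
      rw [h5, Nat.choose_two_right] at h4
      have h6 : 4 * f + 12 - 1 = 4 * f + 11 := by omega
      rw [h6] at h4
      have h7 : (4 * f + 12) * (4 * f + 11) / 2 = (2 * f + 6) * (4 * f + 11) := by
        have : (4 * f + 12) * (4 * f + 11) = 2 * ((2 * f + 6) * (4 * f + 11)) := by ring
        rw [this, Nat.mul_div_cancel_left _ (by norm_num : 0 < 2)]
      rw [h7] at h4
      nlinarith
    -- cast to ℤ and finish
    have hx : ((f : ℤ) + 2) ≤ (u (f + 1) : ℤ) := by exact_mod_cast hfirst
    have hy : ((f : ℤ) + 1) ≤ (u (f + 2) : ℤ) := by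
      have : (f : ℤ) + 2 ≤ (u (f + 2) : ℤ) := le_trans hx (by exact_mod_cast hxy)
      linarith
    have hkey : (0 : ℤ) ≤ ((u (f + 1) : ℤ) - (f + 2)) * ((u (f + 2) : ℤ) - (f + 1)) :=
      mul_nonneg (by linarith) (by linarith)
    have hpsZ : (u (f + 1) : ℤ) * (u (f + 2)) ≤
        ((f : ℤ) + 1) * ((u (f + 1) : ℤ) + (u (f + 2))) + (f : ℤ) * (C : ℤ) := by
      exact_mod_cast hps
    have hUZ : 3 * ((f : ℤ) + 3) * (C : ℤ) ≤ (u (f + 2) : ℤ) := by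
      have := hU
      push_cast at this ⊢
      linarith
    have hCZ : ((f : ℤ) + 2) * ((f : ℤ) + 1) < (C : ℤ) := by exact_mod_cast hCbig
    nlinarith [hkey, hpsZ, hUZ, hCZ]
  · -- m ≥ 3 case : r = f + s + 4
    have e1 : f + 3 + (s + 1) - 1 = f + s + 3 := by omega
    have e2 : f + 3 + (s + 1) - 2 = f + s + 2 := by omega
    rw [e1, e2] at hps
    rw [e1] at hmono hlast hfirst hU hCdef
    set U := u (f + s + 3) with hUdef
    have hlow : ∀ i ∈ Finset.Icc (f + 1) (f + s + 3), f + s + 3 ≤ u i := by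
      intro i hi
      simp only [Finset.mem_Icc] at hi
      exact le_trans hfirst (hmono (f + 1) i le_rfl hi.1 hi.2)
    have hhigh : ∀ i ∈ Finset.Icc (f + 1) (f + s + 3), u i ≤ U := by
      intro i hi
      simp only [Finset.mem_Icc] at hi
      exact hmono i (f + s + 3) hi.1 hi.2 le_rfl
    -- sum bound
    have hsum : ∑ i ∈ Finset.Icc (f + 1) (f + s + 3), u i ≤ (s + 3) * U := by
      calc ∑ i ∈ Finset.Icc (f + 1) (f + s + 3), u i
          ≤ (Finset.Icc (f + 1) (f + s + 3)).card • U := Finset.sum_le_card_nsmul _ _ _ hhigh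
        _ = (s + 3) * U := by
              rw [Nat.card_Icc, smul_eq_mul, show f + s + 3 + 1 - (f + 1) = s + 3 from by omega]
    -- product bound
    have hsplit : Finset.Icc (f + 1) (f + s + 3) = Finset.Icc (f + 1) ((f + s + 2) + 1) := by
      first | rfl | (congr 1; omega)
    have hprod : (f + s + 3) ^ (s + 2) * U ≤ ∏ i ∈ Finset.Icc (f + 1) (f + s + 3), u i := by
      rw [hsplit, Finset.prod_Icc_succ_top (by omega)]
      have h8 : (f + s + 3) ^ (s + 2) ≤ ∏ i ∈ Finset.Icc (f + 1) (f + s + 2), u i := by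
        calc (f + s + 3) ^ (s + 2)
            = ∏ _i ∈ Finset.Icc (f + 1) (f + s + 2), (f + s + 3) := by
              rw [Finset.prod_const, Nat.card_Icc,
                show f + s + 2 + 1 - (f + 1) = s + 2 from by omega]
          _ ≤ ∏ i ∈ Finset.Icc (f + 1) (f + s + 2), u i := by
              apply Finset.prod_le_prod'
              intro i hi
              refine hlow i ?_
              simp only [Finset.mem_Icc] at hi ⊢
              omega
      have hU2 : u ((f + s + 2) + 1) = U := by
        first | rfl | rw [show (f + s + 2) + 1 = f + s + 3 from by omega]
      rw [hU2]
      exact Nat.mul_le_mul_right U h8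
    have hpow : (f + s + 3) ^ 2 ≤ (f + s + 3) ^ (s + 2) :=
      Nat.pow_le_pow_right (by omega) (by omega)
    have hmain : (f + s + 3) ^ 2 * U ≤ (f + s + 2) * ((s + 3) * U) + f * C :=
      calc (f + s + 3) ^ 2 * U ≤ (f + s + 3) ^ (s + 2) * U := Nat.mul_le_mul_right U hpow
        _ ≤ ∏ i ∈ Finset.Icc (f + 1) (f + s + 3), u i := hprod
        _ ≤ (f + s + 2) * ∑ i ∈ Finset.Icc (f + 1) (f + s + 3), u i + f * C := hps
        _ ≤ (f + s + 2) * ((s + 3) * U) + f * C := by gcongr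
    -- so (f+1) * U ≤ f * C
    have hd : (f + s + 2) * (s + 3) + (f + 1) ≤ (f + s + 3) ^ 2 := by nlinarith
    have h9 : ((f + s + 2) * (s + 3)) * U + (f + 1) * U ≤ ((f + s + 2) * (s + 3)) * U + f * C := by
      calc ((f + s + 2) * (s + 3)) * U + (f + 1) * U
          = ((f + s + 2) * (s + 3) + (f + 1)) * U := by ring
        _ ≤ (f + s + 3) ^ 2 * U := Nat.mul_le_mul_right U hd
        _ ≤ (f + s + 2) * ((s + 3) * U) + f * C := hmain
        _ = ((f + s + 2) * (s + 3)) * U + f * C := by ring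
    have h10 : (f + 1) * U ≤ f * C := Nat.le_of_add_le_add_left h9
    -- but U ≥ 3 r C > f C
    have hUbig : 3 * (f + 3 + (s + 1)) * C ≤ U := hU
    nlinarith [h10, hUbig, hC1, Nat.zero_le (f * U), Nat.zero_le (f * C), Nat.zero_le (s * C)]
end
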